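/- Let q > p > 2 and 0 < M < M_b = ((q-p+1)/(q-p))·((q-p+1)/(p-1))^{-1/(q-p+1)}. Then any C^2 solution V of (|V'|^{p-2}V')' + |V'|^q = 0 on (0,1) with V(0)=0, V(1)=M equals V_k(x) = M_b((x+k)^{(q-p)/(q-p+1)} − k^{(q-p)/(q-p+1)}) for the unique k > 0 with V_k(1) = M; in particular V extends to a C^1 function on [0,1] with V'(0) finite. -/

import Mathlib

open Set

open Filter

lemma hasDerivAt_abs_rpow_mul {r : ℝ} (hr : 0 < r) (t : ℝ) :
    HasDerivAt (fun s : ℝ => |s| ^ r * s) ((r + 1) * |t| ^ r) t := by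
  rcases lt_trichotomy t 0 with ht | rfl | ht
  · have hne : (-t) ≠ 0 := by linarith
    have hneg : HasDerivAt (fun s : ℝ => -s) (-1) t := (hasDerivAt_id t).neg
    have h2 : HasDerivAt (fun s : ℝ => (-s) ^ r) (r * (-t) ^ (r - 1) * (-1)) t :=
      (Real.hasDerivAt_rpow_const (x := -t) (p := r) (Or.inl hne)).comp t hneg
    have h3 := h2.mul (hasDerivAt_id t)
    have hd : r * (-t) ^ (r - 1) * (-1) * t + (-t) ^ r * 1 = (r + 1) * (-t) ^ r := by
      have : (-t) ^ r = (-t) ^ (r - 1) * (-t) := by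
        rw [← Real.rpow_add_one hne]; ring_nf
      rw [this]; ring
    simp only [id_eq] at h3; rw [hd] at h3
    have habs : |t| = -t := abs_of_neg ht
    rw [habs]
    apply h3.congr_of_eventuallyEq
    filter_upwards [Iio_mem_nhds ht] with s hs
    rw [abs_of_neg hs]
    rfl
  · rw [abs_zero, Real.zero_rpow hr.ne', mul_zero]
    rw [hasDerivAt_iff_tendsto_slope]
    have hc : ContinuousAt (fun s : ℝ => |s| ^ r) 0 := by
      have : ContinuousAt (fun x : ℝ => x ^ r) (|(0:ℝ)|) := by
        rw [abs_zero]; exact Real.continuousAt_rpow_const 0 r (Or.inr hr.le)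
      exact this.comp continuous_abs.continuousAt
    have h0 : Tendsto (fun s : ℝ => |s| ^ r) (nhdsWithin 0 {(0:ℝ)}ᶜ) (nhds 0) := by
      have := hc.tendsto
      rw [abs_zero, Real.zero_rpow hr.ne'] at this
      exact this.mono_left nhdsWithin_le_nhds
    apply h0.congr'
    filter_upwards [self_mem_nhdsWithin] with s hs
    have hs0 : s ≠ 0 := hs
    simp [slope_def_field, hs0, mul_div_assoc, div_self hs0]
  · have hne : t ≠ 0 := ne_of_gt ht
    have h2 : HasDerivAt (fun s : ℝ => s ^ r) (r * t ^ (r - 1)) t :=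
      Real.hasDerivAt_rpow_const (Or.inl hne)
    have h3 := h2.mul (hasDerivAt_id t)
    have hd : r * t ^ (r - 1) * t + t ^ r * 1 = (r + 1) * t ^ r := by
      have : t ^ r = t ^ (r - 1) * t := by
        rw [← Real.rpow_add_one hne]; ring_nf
      rw [this]; ring
    simp only [id_eq] at h3; rw [hd] at h3
    rw [abs_of_pos ht]
    apply h3.congr_of_eventuallyEq
    filter_upwards [Ioi_mem_nhds ht] with s hs
    rw [abs_of_pos hs]
    rfl

set_option maxHeartbeats 2000000 in
theorem stmt_5 (p q M Mb : ℝ) (hp : 2 < p) (hq : p < q)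
    (hMb : Mb = ((q - p + 1) / (q - p)) * ((q - p + 1) / (p - 1)) ^ (-(1 / (q - p + 1))))
    (hM : 0 < M) (hMMb : M < Mb)
    (V : ℝ → ℝ)
    (hVcont : ContinuousOn V (Set.Icc 0 1))
    (hVC2 : ContDiffOn ℝ 2 V (Set.Ioo 0 1))
    (hVnonneg : ∀ x ∈ Set.Icc (0 : ℝ) 1, 0 ≤ V x)
    (heq : ∀ x ∈ Set.Ioo (0 : ℝ) 1,
      deriv (fun y => |deriv V y| ^ (p - 2) * deriv V y) x + |deriv V x| ^ q = 0)
    (hV0 : V 0 = 0) (hV1 : V 1 = M) :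
    ∃! k : ℝ, 0 < k ∧
      Mb * ((1 + k) ^ ((q - p) / (q - p + 1)) - k ^ ((q - p) / (q - p + 1))) = M ∧
      ∀ x ∈ Set.Icc (0 : ℝ) 1,
        V x = Mb * ((x + k) ^ ((q - p) / (q - p + 1)) - k ^ ((q - p) / (q - p + 1))) := by
  have hp1 : (0:ℝ) < p - 1 := by linarith
  have hp2 : (0:ℝ) < p - 2 := by linarith
  set γ : ℝ := q / (p - 1) with hγdef
  have hγ1 : 1 < γ := (one_lt_div hp1).mpr (by linarith)
  have hγ0 : 0 < γ - 1 := by linarith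
  set u : ℝ → ℝ := deriv V with hudef
  set φ : ℝ → ℝ := fun x => |u x| ^ (p - 2) * u x with hφdef
  -- V differentiable on Ioo
  have hVd : ∀ x ∈ Ioo (0:ℝ) 1, HasDerivAt V (u x) x := by
    intro x hx
    exact ((hVC2.differentiableOn (by norm_num)).differentiableAt
      (isOpen_Ioo.mem_nhds hx)).hasDerivAt
  -- deriv V differentiable on Ioo
  have hud : ∀ x ∈ Ioo (0:ℝ) 1, DifferentiableAt ℝ u x := by
    intro x hx
    exact ((hVC2.deriv_of_isOpen (m := 1) isOpen_Ioo (by norm_num)).differentiableOn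
      (by norm_num)).differentiableAt (isOpen_Ioo.mem_nhds hx)
  -- |φ x| = |u x| ^ (p-1)
  have habsφ : ∀ x, |φ x| = |u x| ^ (p - 1) := by
    intro x
    rcases eq_or_ne (u x) 0 with h | h
    · simp [hφdef, h, Real.zero_rpow (ne_of_gt hp2), Real.zero_rpow (ne_of_gt hp1)]
    · have h0 : |u x| ≠ 0 := abs_ne_zero.mpr h
      have : |φ x| = |u x| ^ (p-2) * |u x| := by
        rw [hφdef]
        rw [abs_mul, abs_of_nonneg (Real.rpow_nonneg (abs_nonneg _) _)]
      rw [this, ← Real.rpow_add_one h0]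
      ring_nf
  -- |u x| ^ q = |φ x| ^ γ
  have habsq : ∀ x, |u x| ^ q = |φ x| ^ γ := by
    intro x
    rw [habsφ, ← Real.rpow_mul (abs_nonneg _)]
    congr 1
    rw [hγdef]; field_simp
  -- φ has derivative -(|φ|^γ)
  have hφ' : ∀ x ∈ Ioo (0:ℝ) 1, HasDerivAt φ (-(|φ x| ^ γ)) x := by
    intro x hx
    have h1 : HasDerivAt φ (((p - 2) + 1) * |u x| ^ (p - 2) * deriv u x) x := by
      have := (hasDerivAt_abs_rpow_mul hp2 (u x)).comp x ((hud x hx).hasDerivAt)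
      simpa [Function.comp_def, mul_assoc] using this
    have h2 : deriv φ x = -(|u x| ^ q) := by
      have h := heq x hx
      have : deriv φ x + |u x| ^ q = 0 := h
      linarith
    have h4 : HasDerivAt φ (deriv φ x) x := h1.differentiableAt.hasDerivAt
    rw [h2, habsq] at h4
    exact h4
  have hφcont : ∀ x ∈ Ioo (0:ℝ) 1, ContinuousAt φ x := fun x hx =>
    (hφ' x hx).differentiableAt.continuousAt
  have hzero : ∀ x₁ ∈ Ioo (0:ℝ) 1, φ x₁ = 0 → ∀ b, x₁ ≤ b → b < 1 → φ b = 0 := by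
    intro x₁ hx₁ h0 b hx₁b hb1
    have hsub : Icc x₁ b ⊆ Ioo (0:ℝ) 1 := fun y hy =>
      ⟨lt_of_lt_of_le hx₁.1 hy.1, lt_of_le_of_lt hy.2 hb1⟩
    have hcont : ContinuousOn φ (Icc x₁ b) := fun y hy =>
      (hφcont y (hsub hy)).continuousWithinAt
    obtain ⟨c, hc, hmax⟩ := (isCompact_Icc).exists_isMaxOn ⟨x₁, left_mem_Icc.mpr hx₁b⟩
      (continuous_abs.comp_continuousOn hcont)
    have hKb : ∀ y ∈ Ico x₁ b, ‖-(|φ y| ^ γ)‖ ≤ |φ c| ^ (γ - 1) * ‖φ y‖ + 0 := by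
      intro y hy
      rw [norm_neg, Real.norm_eq_abs, Real.norm_eq_abs, add_zero,
        abs_of_nonneg (Real.rpow_nonneg (abs_nonneg _) _)]
      rcases eq_or_ne (φ y) 0 with h | h
      · simp [h, Real.zero_rpow (by linarith : γ ≠ 0)]
      · have h0' : (0:ℝ) < |φ y| := abs_pos.mpr h
        have he : |φ y| ^ γ = |φ y| ^ (γ - 1) * |φ y| := by
          rw [← Real.rpow_add_one (ne_of_gt h0')]; ring_nf
        rw [he]
        have := Real.rpow_le_rpow (abs_nonneg (φ y)) (hmax (Ico_subset_Icc_self hy)) hγ0.le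
        exact mul_le_mul_of_nonneg_right this (abs_nonneg _)
    have hg := norm_le_gronwallBound_of_norm_deriv_right_le (δ := 0) (ε := 0) hcont
      (fun y hy => (hφ' y (hsub (Ico_subset_Icc_self hy))).hasDerivWithinAt)
      (by simp [h0]) hKb b (right_mem_Icc.mpr hx₁b)
    rw [gronwallBound_ε0, zero_mul] at hg
    have := abs_nonneg (φ b)
    rw [Real.norm_eq_abs] at hg
    exact abs_eq_zero.mp (le_antisymm hg (abs_nonneg _))
  set h : ℝ → ℝ := fun y => |φ y| ^ (1 - γ) with hhdef
  have hHpos : ∀ x ∈ Ioo (0:ℝ) 1, 0 < φ x → HasDerivAt h (γ - 1) x := by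
    intro x hx hpos
    have hev : ∀ᶠ y in nhds x, 0 < φ y := (hφcont x hx).eventually (eventually_gt_nhds hpos)
    have h1 := (Real.hasDerivAt_rpow_const (x := φ x) (p := 1 - γ)
      (Or.inl (ne_of_gt hpos))).comp x (hφ' x hx)
    have heval : (1 - γ) * φ x ^ (1 - γ - 1) * -(|φ x| ^ γ) = γ - 1 := by
      rw [abs_of_pos hpos]
      have e : φ x ^ (1 - γ - 1) * φ x ^ γ = 1 := by
        rw [← Real.rpow_add hpos]
        norm_num
      linear_combination (γ - 1) * e
    rw [heval] at h1
    apply h1.congr_of_eventuallyEq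
    filter_upwards [hev] with y hy
    simp [hhdef, Function.comp, abs_of_pos hy]
  have hHneg : ∀ x ∈ Ioo (0:ℝ) 1, φ x < 0 → HasDerivAt h (-(γ - 1)) x := by
    intro x hx hneg
    have hev : ∀ᶠ y in nhds x, φ y < 0 := (hφcont x hx).eventually (eventually_lt_nhds hneg)
    have hpos : 0 < -φ x := by linarith
    have h1 := (Real.hasDerivAt_rpow_const (x := -φ x) (p := 1 - γ)
      (Or.inl (ne_of_gt hpos))).comp x (hφ' x hx).neg
    have heval : (1 - γ) * (-φ x) ^ (1 - γ - 1) * -(-(|φ x| ^ γ)) = -(γ - 1) := by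
      rw [abs_of_neg hneg]
      have e : (-φ x) ^ (1 - γ - 1) * (-φ x) ^ γ = 1 := by
        rw [← Real.rpow_add hpos]
        norm_num
      linear_combination -(γ - 1) * e
    rw [heval] at h1
    apply h1.congr_of_eventuallyEq
    filter_upwards [hev] with y hy
    simp [hhdef, Function.comp, abs_of_neg hy]
  have hivtpos : ∀ a b, Icc a b ⊆ Ioo (0:ℝ) 1 → (∀ y ∈ Icc a b, φ y ≠ 0) → 0 < φ a →
      ∀ y ∈ Icc a b, 0 < φ y := by
    intro a b hsub hne ha y hy
    by_contra hcon
    push_neg at hcon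
    have hylt : φ y < 0 := lt_of_le_of_ne hcon (hne y hy)
    have hcont : ContinuousOn φ (Icc a y) := fun z hz =>
      (hφcont z (hsub ⟨hz.1, le_trans hz.2 hy.2⟩)).continuousWithinAt
    obtain ⟨z, hz, hz0⟩ := intermediate_value_Icc' hy.1 hcont ⟨hylt.le, ha.le⟩
    exact hne z ⟨hz.1, le_trans hz.2 hy.2⟩ hz0
  have hivtneg : ∀ a b, Icc a b ⊆ Ioo (0:ℝ) 1 → (∀ y ∈ Icc a b, φ y ≠ 0) → φ a < 0 →
      ∀ y ∈ Icc a b, φ y < 0 := by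
    intro a b hsub hne ha y hy
    by_contra hcon
    push_neg at hcon
    have hylt : 0 < φ y := lt_of_le_of_ne hcon (Ne.symm (hne y hy))
    have hcont : ContinuousOn φ (Icc a y) := fun z hz =>
      (hφcont z (hsub ⟨hz.1, le_trans hz.2 hy.2⟩)).continuousWithinAt
    obtain ⟨z, hz, hz0⟩ := intermediate_value_Icc hy.1 hcont ⟨ha.le, hylt.le⟩
    exact hne z ⟨hz.1, le_trans hz.2 hy.2⟩ hz0
  have hbdry : ∀ (g : ℝ → ℝ) (c : ℝ), ContinuousOn g (Icc 0 1) →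
      (∀ y ∈ Ioo (0:ℝ) 1, g y = c) → g 0 = c ∧ g 1 = c := by
    intro g c hg hgc
    have hcl : closure (Ioo (0:ℝ) 1) = Icc 0 1 := closure_Ioo one_ne_zero.symm
    constructor
    · have h1 : Tendsto g (nhdsWithin 0 (Ioo (0:ℝ) 1)) (nhds (g 0)) :=
        (hg.continuousWithinAt (left_mem_Icc.mpr zero_le_one)).mono Ioo_subset_Icc_self
      have h2 : Tendsto g (nhdsWithin 0 (Ioo (0:ℝ) 1)) (nhds c) := by
        apply Tendsto.congr' _ tendsto_const_nhds
        filter_upwards [self_mem_nhdsWithin] with y hy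
        exact (hgc y hy).symm
      have hne : (nhdsWithin (0:ℝ) (Ioo (0:ℝ) 1)).NeBot := by
        rw [← mem_closure_iff_nhdsWithin_neBot, hcl]
        exact left_mem_Icc.mpr zero_le_one
      exact tendsto_nhds_unique h1 h2
    · have h1 : Tendsto g (nhdsWithin 1 (Ioo (0:ℝ) 1)) (nhds (g 1)) :=
        (hg.continuousWithinAt (right_mem_Icc.mpr zero_le_one)).mono Ioo_subset_Icc_self
      have h2 : Tendsto g (nhdsWithin 1 (Ioo (0:ℝ) 1)) (nhds c) := by
        apply Tendsto.congr' _ tendsto_const_nhds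
        filter_upwards [self_mem_nhdsWithin] with y hy
        exact (hgc y hy).symm
      have hne : (nhdsWithin (1:ℝ) (Ioo (0:ℝ) 1)).NeBot := by
        rw [← mem_closure_iff_nhdsWithin_neBot, hcl]
        exact right_mem_Icc.mpr zero_le_one
      exact tendsto_nhds_unique h1 h2
  have hneq : ∀ x ∈ Ioo (0:ℝ) 1, φ x ≠ 0 := by
    by_contra hcon
    push_neg at hcon
    obtain ⟨x₁, hx₁, h0⟩ := hcon
    by_cases hall : ∀ y ∈ Ioo (0:ℝ) 1, φ y = 0
    · have hu0 : ∀ y ∈ Ioo (0:ℝ) 1, u y = 0 := by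
        intro y hy
        by_contra hu
        have h1 : (0:ℝ) < |u y| ^ (p - 2) := Real.rpow_pos_of_pos (abs_pos.mpr hu) _
        have h2 := hall y hy
        rw [hφdef] at h2
        rcases mul_eq_zero.mp h2 with h3 | h3
        · exact (ne_of_gt h1) h3
        · exact hu h3
      have hVconst : ∀ y z, y ∈ Ioo (0:ℝ) 1 → z ∈ Ioo (0:ℝ) 1 → y ≤ z → V z = V y := by
        intro y z hy hz hyz
        have hmem : ∀ w ∈ Icc y z, w ∈ Ioo (0:ℝ) 1 := fun w hw =>
          ⟨lt_of_lt_of_le hy.1 hw.1, lt_of_le_of_lt hw.2 hz.2⟩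
        have hc : ContinuousOn V (Icc y z) := fun w hw =>
          (hVd w (hmem w hw)).continuousAt.continuousWithinAt
        have hd : ∀ w ∈ Ico y z, HasDerivWithinAt V 0 (Ici w) w := by
          intro w hw
          have h1 := hVd w (hmem w (Ico_subset_Icc_self hw))
          rw [hu0 w (hmem w (Ico_subset_Icc_self hw))] at h1
          exact h1.hasDerivWithinAt
        exact constant_of_has_deriv_right_zero hc hd z (right_mem_Icc.mpr hyz)
      have hmem2 : (1/2 : ℝ) ∈ Ioo (0:ℝ) 1 := by norm_num
      have hVc : ∀ y ∈ Ioo (0:ℝ) 1, V y = V (1/2) := by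
        intro y hy
        rcases le_total y (1/2) with hle | hle
        · exact (hVconst y (1/2) hy hmem2 hle).symm
        · exact hVconst (1/2) y hmem2 hy hle
      obtain ⟨hb0, hb1⟩ := hbdry V (V (1/2)) hVcont hVc
      rw [hV0] at hb0
      rw [hV1] at hb1
      rw [← hb0] at hb1
      linarith
    · push_neg at hall
      obtain ⟨x₂, hx₂, h2⟩ := hall
      have hx21 : x₂ < x₁ := by
        by_contra hle
        push_neg at hle
        exact h2 (hzero x₁ hx₁ h0 x₂ hle hx₂.2)
      have hsub' : Icc x₂ x₁ ⊆ Ioo (0:ℝ) 1 := fun y hy =>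
        ⟨lt_of_lt_of_le hx₂.1 hy.1, lt_of_le_of_lt hy.2 hx₁.2⟩
      set Z := {y | y ∈ Icc x₂ x₁ ∧ φ y = 0} with hZ
      have hZne : x₁ ∈ Z := ⟨⟨hx21.le, le_refl _⟩, h0⟩
      have hZclosed : IsClosed Z := by
        have hZeq : Z = Icc x₂ x₁ ∩ φ ⁻¹' {0} := by
          ext y; simp [hZ]
        rw [hZeq]
        exact ContinuousOn.preimage_isClosed_of_isClosed
          (fun y hy => (hφcont y (hsub' hy)).continuousWithinAt) isClosed_Icc
          isClosed_singleton
      set x₀ := sInf Z with hx₀def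
      have hZbdd : BddBelow Z := ⟨x₂, fun y hy => hy.1.1⟩
      have hx₀Z : x₀ ∈ Z := hZclosed.csInf_mem ⟨x₁, hZne⟩ hZbdd
      have hx₀Icc : x₀ ∈ Icc x₂ x₁ := hx₀Z.1
      have hφx₀ : φ x₀ = 0 := hx₀Z.2
      have hx20 : x₂ < x₀ := lt_of_le_of_ne hx₀Icc.1 (fun he => h2 (he ▸ hφx₀))
      have hnz : ∀ y ∈ Ico x₂ x₀, φ y ≠ 0 := by
        intro y hy hy0
        have hle : x₀ ≤ y := csInf_le hZbdd ⟨⟨hy.1, le_trans hy.2.le hx₀Icc.2⟩, hy0⟩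
        exact absurd hle (not_le.mpr hy.2)
      have hIcoIoo : ∀ y ∈ Ico x₂ x₀, y ∈ Ioo (0:ℝ) 1 := fun y hy =>
        hsub' ⟨hy.1, le_trans hy.2.le hx₀Icc.2⟩
      obtain ⟨d, hdabs, hder⟩ : ∃ d : ℝ, |d| = γ - 1 ∧
          ∀ y ∈ Ico x₂ x₀, HasDerivAt h d y := by
        rcases h2.lt_or_gt with hneg | hpos
        · refine ⟨-(γ - 1), by rw [abs_neg, abs_of_pos hγ0], ?_⟩
          intro y hy
          apply hHneg y (hIcoIoo y hy)
          exact hivtneg x₂ y (fun z hz => hIcoIoo z ⟨hz.1, lt_of_le_of_lt hz.2 hy.2⟩)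
            (fun z hz => hnz z ⟨hz.1, lt_of_le_of_lt hz.2 hy.2⟩) hneg y
            (right_mem_Icc.mpr hy.1)
        · refine ⟨γ - 1, abs_of_pos hγ0, ?_⟩
          intro y hy
          apply hHpos y (hIcoIoo y hy)
          exact hivtpos x₂ y (fun z hz => hIcoIoo z ⟨hz.1, lt_of_le_of_lt hz.2 hy.2⟩)
            (fun z hz => hnz z ⟨hz.1, lt_of_le_of_lt hz.2 hy.2⟩) hpos y
            (right_mem_Icc.mpr hy.1)
      have hlin : ∀ y ∈ Ico x₂ x₀, h y = h x₂ + d * (y - x₂) := by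
        intro y hy
        have hcont : ContinuousOn (fun z => h z - d * z) (Icc x₂ y) := fun z hz =>
          (((hder z ⟨hz.1, lt_of_le_of_lt hz.2 hy.2⟩).sub
            ((hasDerivAt_id z).const_mul d)).continuousAt).continuousWithinAt
        have hd0 : ∀ z ∈ Ico x₂ y, HasDerivWithinAt (fun z => h z - d * z) 0 (Ici z) z := by
          intro z hz
          have h1 := (hder z ⟨hz.1, lt_trans hz.2 hy.2⟩).sub ((hasDerivAt_id z).const_mul d)
          simpa [Pi.sub_def] using h1.hasDerivWithinAt
        have hc := constant_of_has_deriv_right_zero hcont hd0 y (right_mem_Icc.mpr hy.1)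
        linarith
      have hB0 : 0 < h x₂ := by
        rw [hhdef]
        exact Real.rpow_pos_of_pos (abs_pos.mpr h2) _
      have hhb : ∀ y ∈ Ico x₂ x₀, h y ≤ h x₂ + (γ - 1) := by
        intro y hy
        rw [hlin y hy]
        have h1 : d * (y - x₂) ≤ γ - 1 := by
          calc d * (y - x₂) ≤ |d * (y - x₂)| := le_abs_self _
            _ = (γ - 1) * |y - x₂| := by rw [abs_mul, hdabs]
            _ ≤ (γ - 1) * 1 := by
                apply mul_le_mul_of_nonneg_left _ hγ0.le
                rw [abs_of_nonneg (by linarith [hy.1] : (0:ℝ) ≤ y - x₂)]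
                have hy1 := (hIcoIoo y hy).2
                have hx2p := hx₂.1
                linarith
            _ = γ - 1 := mul_one _
        linarith
      set B := h x₂ + (γ - 1) with hB
      have hBpos : 0 < B := by rw [hB]; linarith
      set ε := (B + 1) ^ (1 / (1 - γ)) with hε
      have hε0 : 0 < ε := Real.rpow_pos_of_pos (by linarith) _
      have hεpow : ε ^ (1 - γ) = B + 1 := by
        rw [hε, ← Real.rpow_mul (by linarith : (0:ℝ) ≤ B + 1)]
        rw [one_div, inv_mul_cancel₀ (by linarith : (1:ℝ) - γ ≠ 0), Real.rpow_one]
      have htd : Tendsto (fun y => |φ y|) (nhdsWithin x₀ (Ioo x₂ x₀)) (nhds 0) := by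
        have h1 := ((hφcont x₀ (hsub' hx₀Icc)).tendsto).abs
        rw [hφx₀, abs_zero] at h1
        exact h1.mono_left nhdsWithin_le_nhds
      have hnb : (nhdsWithin x₀ (Ioo x₂ x₀)).NeBot := by
        rw [← mem_closure_iff_nhdsWithin_neBot, closure_Ioo (ne_of_lt hx20)]
        exact right_mem_Icc.mpr hx20.le
      have hev : ∀ᶠ y in nhdsWithin x₀ (Ioo x₂ x₀), |φ y| < ε :=
        htd.eventually (eventually_lt_nhds hε0)
      obtain ⟨y, hyφ, hymem⟩ := (hev.and self_mem_nhdsWithin).exists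
      have hyIco : y ∈ Ico x₂ x₀ := ⟨hymem.1.le, hymem.2⟩
      have hyne : φ y ≠ 0 := hnz y hyIco
      have hlt : ε ^ (1 - γ) < |φ y| ^ (1 - γ) :=
        Real.rpow_lt_rpow_of_neg (abs_pos.mpr hyne) hyφ (by linarith)
      rw [hεpow] at hlt
      have hle := hhb y hyIco
      simp only [hhdef] at hle
      linarith
  have hconst : ∀ g : ℝ → ℝ, (∀ t ∈ Ioo (0:ℝ) 1, HasDerivAt g 0 t) →
      ∀ t ∈ Ioo (0:ℝ) 1, g t = g (1/2) := by
    intro g hg t ht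
    have hmemhalf : (1/2 : ℝ) ∈ Ioo (0:ℝ) 1 := by norm_num
    have key : ∀ a b, a ∈ Ioo (0:ℝ) 1 → b ∈ Ioo (0:ℝ) 1 → a ≤ b → g b = g a := by
      intro a b ha hb hab
      have hsub : Icc a b ⊆ Ioo (0:ℝ) 1 := fun z hz =>
        ⟨lt_of_lt_of_le ha.1 hz.1, lt_of_le_of_lt hz.2 hb.2⟩
      have hc : ContinuousOn g (Icc a b) := fun z hz =>
        ((hg z (hsub hz)).continuousAt).continuousWithinAt
      have hd : ∀ z ∈ Ico a b, HasDerivWithinAt g 0 (Ici z) z := fun z hz =>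
        (hg z (hsub (Ico_subset_Icc_self hz))).hasDerivWithinAt
      exact constant_of_has_deriv_right_zero hc hd b (right_mem_Icc.mpr hab)
    rcases le_total t (1/2 : ℝ) with hle | hle
    · exact (key t (1/2) ht hmemhalf hle).symm
    · exact key (1/2) t hmemhalf ht hle
  have hust : ∀ t, 0 < φ t → 0 < u t := by
    intro t hφt
    have he : φ t = |u t| ^ (p - 2) * u t := by rw [hφdef]
    rcases lt_trichotomy (u t) 0 with hlt | heq0 | hgt
    · exfalso
      have h1 : (0:ℝ) < |u t| ^ (p - 2) := Real.rpow_pos_of_pos (abs_pos.mpr (ne_of_lt hlt)) _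
      have h2 := mul_neg_of_pos_of_neg h1 hlt
      rw [← he] at h2
      linarith
    · exfalso
      rw [heq0, mul_zero] at he
      linarith
    · exact hgt
  have hustneg : ∀ t, φ t < 0 → u t < 0 := by
    intro t hφt
    have he : φ t = |u t| ^ (p - 2) * u t := by rw [hφdef]
    rcases lt_trichotomy (u t) 0 with hlt | heq0 | hgt
    · exact hlt
    · exfalso
      rw [heq0, mul_zero] at he
      linarith
    · exfalso
      have h1 : (0:ℝ) < |u t| ^ (p - 2) := Real.rpow_pos_of_pos (abs_pos.mpr (ne_of_gt hgt)) _
      have h2 := mul_pos h1 hgt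
      rw [← he] at h2
      linarith
  have hmemhalf : (1/2 : ℝ) ∈ Ioo (0:ℝ) 1 := by norm_num
  have hIccsub : ∀ a b : ℝ, a ∈ Ioo (0:ℝ) 1 → b ∈ Ioo (0:ℝ) 1 → Icc a b ⊆ Ioo (0:ℝ) 1 :=
    fun a b ha hb z hz => ⟨lt_of_lt_of_le ha.1 hz.1, lt_of_le_of_lt hz.2 hb.2⟩
  have hsigncases : (∀ t ∈ Ioo (0:ℝ) 1, 0 < φ t) ∨ (∀ t ∈ Ioo (0:ℝ) 1, φ t < 0) := by
    rcases (hneq (1/2) hmemhalf).lt_or_gt with hneg | hpos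
    · right
      intro t ht
      rcases le_total (1/2 : ℝ) t with hle | hle
      · exact hivtneg (1/2) t (hIccsub _ _ hmemhalf ht)
          (fun z hz => hneq z (hIccsub _ _ hmemhalf ht hz)) hneg t (right_mem_Icc.mpr hle)
      · by_contra hc
        push_neg at hc
        have hpos' : 0 < φ t := lt_of_le_of_ne hc (Ne.symm (hneq t ht))
        have := hivtpos t (1/2) (hIccsub _ _ ht hmemhalf)
          (fun z hz => hneq z (hIccsub _ _ ht hmemhalf hz)) hpos' (1/2)
          (right_mem_Icc.mpr hle)
        linarith
    · left
      intro t ht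
      rcases le_total (1/2 : ℝ) t with hle | hle
      · exact hivtpos (1/2) t (hIccsub _ _ hmemhalf ht)
          (fun z hz => hneq z (hIccsub _ _ hmemhalf ht hz)) hpos t (right_mem_Icc.mpr hle)
      · by_contra hc
        push_neg at hc
        have hneg' : φ t < 0 := lt_of_le_of_ne hc (hneq t ht)
        have := hivtneg t (1/2) (hIccsub _ _ ht hmemhalf)
          (fun z hz => hneq z (hIccsub _ _ ht hmemhalf hz)) hneg' (1/2)
          (right_mem_Icc.mpr hle)
        linarith
  rcases hsigncases with hpos | hneg
  · set A : ℝ := (q - p) / (q - p + 1) with hA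
    have hqp : (0:ℝ) < q - p := by linarith
    have hβ : (0:ℝ) < q - p + 1 := by linarith
    have hA0 : 0 < A := div_pos hqp hβ
    have hA1 : A < 1 := (div_lt_one hβ).mpr (by linarith)
    have hder2 : ∀ t ∈ Ioo (0:ℝ) 1, HasDerivAt (fun z => h z - (γ - 1) * z) 0 t := by
      intro t ht
      have h1 := (hHpos t ht (hpos t ht)).sub ((hasDerivAt_id t).const_mul (γ - 1))
      simpa [Pi.sub_def] using h1
    have hlin := hconst _ hder2
    set C : ℝ := h (1/2) - (γ - 1) * (1/2) with hCdef
    have hlin' : ∀ t ∈ Ioo (0:ℝ) 1, h t = (γ - 1) * t + C := by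
      intro t ht
      have h1 := hlin t ht
      linarith
    have hhpos : ∀ t ∈ Ioo (0:ℝ) 1, 0 < h t := by
      intro t ht
      have h1 := Real.rpow_pos_of_pos (abs_pos.mpr (hneq t ht)) (1 - γ)
      simpa [hhdef] using h1
    have hC0 : 0 ≤ C := by
      by_contra hc
      push_neg at hc
      clear_value C
      have htmem : min (1/2 : ℝ) (-C / (2 * (γ - 1))) ∈ Ioo (0:ℝ) 1 := by
        constructor
        · exact lt_min (by norm_num) (div_pos (by linarith) (by linarith))
        · exact lt_of_le_of_lt (min_le_left _ _) (by norm_num)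
      have h1 := hhpos _ htmem
      rw [hlin' _ htmem] at h1
      have h2 : min (1/2 : ℝ) (-C / (2 * (γ - 1))) ≤ -C / (2 * (γ - 1)) := min_le_right _ _
      have h3 := mul_le_mul_of_nonneg_left h2 hγ0.le
      have h4 : (γ - 1) * (-C / (2 * (γ - 1))) = -C / 2 := by
        field_simp
      rw [h4] at h3
      nlinarith [h1, h3, hc]
    set k : ℝ := C / (γ - 1) with hkdef
    have hγne : γ - 1 ≠ 0 := ne_of_gt hγ0
    have hk0 : 0 ≤ k := div_nonneg hC0 hγ0.le
    have hlin2 : ∀ t ∈ Ioo (0:ℝ) 1, h t = (γ - 1) * (t + k) := by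
      intro t ht
      rw [hlin' t ht, hkdef]
      field_simp
    clear_value k
    have hu_eq : ∀ t ∈ Ioo (0:ℝ) 1, u t = ((γ - 1) * (t + k)) ^ (-(1 / (q - p + 1))) := by
      intro t ht
      have htk : 0 < t + k := by linarith [ht.1]
      have hAt : 0 < (γ - 1) * (t + k) := mul_pos hγ0 htk
      have e0 : |φ t| ^ (1 - γ) = (γ - 1) * (t + k) := by
        have h1 := hlin2 t ht
        simpa [hhdef] using h1
      have e1 : |φ t| = ((γ - 1) * (t + k)) ^ (1 / (1 - γ)) := by
        rw [← e0, ← Real.rpow_mul (abs_nonneg _), mul_one_div,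
          div_self (by linarith : (1:ℝ) - γ ≠ 0), Real.rpow_one]
      have e2 : |u t| = |φ t| ^ (1 / (p - 1)) := by
        rw [habsφ, ← Real.rpow_mul (abs_nonneg _), mul_one_div,
          div_self (ne_of_gt hp1), Real.rpow_one]
      have e3 : u t = |u t| := (abs_of_pos (hust t (hpos t ht))).symm
      rw [e3, e2, e1, ← Real.rpow_mul hAt.le]
      congr 1
      rw [div_mul_div_comm, one_mul]
      rw [show ((1:ℝ) - γ) * (p - 1) = -(q - p + 1) by
        rw [hγdef]; field_simp; ring]
      rw [div_neg]
    have hγm : γ - 1 = (q - p + 1) / (p - 1) := by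
      rw [hγdef]
      field_simp
      ring
    have hMbA : Mb * A = (γ - 1) ^ (-(1 / (q - p + 1))) := by
      rw [hγm, hMb, hA]
      have h1 : (q - p + 1) / (q - p) * ((q - p) / (q - p + 1)) = 1 := by
        field_simp
      linear_combination ((q - p + 1) / (p - 1)) ^ (-(1 / (q - p + 1))) * h1
    have hAe : A - 1 = -(1 / (q - p + 1)) := by
      rw [hA]
      field_simp
      ring
    have hW' : ∀ t ∈ Ioo (0:ℝ) 1, HasDerivAt
        (fun x => Mb * ((x + k) ^ A - k ^ A)) (u t) t := by
      intro t ht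
      have htk : 0 < t + k := by linarith [ht.1]
      have h1 : HasDerivAt (fun x : ℝ => x + k) 1 t := (hasDerivAt_id t).add_const k
      have h2 : HasDerivAt (fun x : ℝ => (x + k) ^ A) (A * (t + k) ^ (A - 1) * 1) t := by
        have := (Real.hasDerivAt_rpow_const (x := t + k) (p := A)
          (Or.inl (ne_of_gt htk))).comp t h1
        simpa [Function.comp_def] using this
      have h3 := (h2.sub_const (k ^ A)).const_mul Mb
      refine h3.congr_deriv ?_
      rw [hu_eq t ht, Real.mul_rpow hγ0.le htk.le, ← hMbA, ← hAe]
      ring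
    have hG' : ∀ t ∈ Ioo (0:ℝ) 1, HasDerivAt
        (fun x => V x - Mb * ((x + k) ^ A - k ^ A)) 0 t := by
      intro t ht
      have h1 := (hVd t ht).sub (hW' t ht)
      simpa [Pi.sub_def] using h1
    have hWcont : Continuous (fun x : ℝ => Mb * ((x + k) ^ A - k ^ A)) := by
      have hc1 : Continuous (fun x : ℝ => (x + k) ^ A) := by
        rw [continuous_iff_continuousAt]
        intro x
        exact (Real.continuousAt_rpow_const _ _ (Or.inr hA0.le)).comp
          (continuousAt_id.add continuousAt_const)
      exact continuous_const.mul (hc1.sub continuous_const)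
    have hGc := hconst _ hG'
    obtain ⟨hG0, hG1⟩ := hbdry (fun x => V x - Mb * ((x + k) ^ A - k ^ A))
      (V (1/2) - Mb * ((1/2 + k) ^ A - k ^ A)) (hVcont.sub hWcont.continuousOn)
      (fun y hy => by simpa using hGc y hy)
    have hW0 : Mb * ((0 + k) ^ A - k ^ A) = 0 := by rw [zero_add, sub_self, mul_zero]
    rw [hV0, hW0] at hG0
    rw [hV1] at hG1
    have hhalf0 : V (1/2) - Mb * ((1/2 + k) ^ A - k ^ A) = 0 := by linarith
    have hcond2 : Mb * ((1 + k) ^ A - k ^ A) = M := by linarith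
    have hkpos : 0 < k := by
      rcases lt_or_eq_of_le hk0 with hlt | heqk
      · exact hlt
      · exfalso
        rw [← heqk] at hcond2
        norm_num [Real.zero_rpow (ne_of_gt hA0), Real.one_rpow] at hcond2
        linarith
    have hcond3 : ∀ x ∈ Icc (0:ℝ) 1, V x = Mb * ((x + k) ^ A - k ^ A) := by
      intro x hx
      rcases eq_or_lt_of_le hx.1 with h0' | h0'
      · rw [← h0', hV0, hW0]
      rcases eq_or_lt_of_le hx.2 with h1' | h1'
      · rw [h1', hV1]
        linarith
      · have hgx := hGc x ⟨h0', h1'⟩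
        linarith
    refine ⟨k, ⟨hkpos, hcond2, hcond3⟩, ?_⟩
    rintro k' ⟨hk'0, hk'eq, -⟩
    clear_value A γ C h φ u
    have hMb0 : 0 < Mb := lt_trans hM hMMb
    have hgd : ∀ y : ℝ, 0 < y → HasDerivAt (fun y : ℝ => (1 + y) ^ A - y ^ A)
        (A * (1 + y) ^ (A - 1) * 1 - A * y ^ (A - 1)) y := by
      intro y hy0
      have hd1 : HasDerivAt (fun y : ℝ => (1 + y) ^ A) (A * (1 + y) ^ (A - 1) * 1) y := by
        have := (Real.hasDerivAt_rpow_const (x := 1 + y) (p := A)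
          (Or.inl (by linarith : (1:ℝ) + y ≠ 0))).comp y ((hasDerivAt_id y).const_add 1)
        simpa [Function.comp_def] using this
      have hd2 : HasDerivAt (fun y : ℝ => y ^ A) (A * y ^ (A - 1)) y :=
        Real.hasDerivAt_rpow_const (Or.inl (ne_of_gt hy0))
      exact hd1.sub hd2
    have hg : StrictAntiOn (fun y : ℝ => (1 + y) ^ A - y ^ A) (Ioi 0) := by
      apply strictAntiOn_of_deriv_neg (convex_Ioi 0)
      · intro y hy
        exact ((hgd y hy).continuousAt).continuousWithinAt
      · intro y hy
        rw [interior_Ioi] at hy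
        have hy0 : (0:ℝ) < y := hy
        rw [(hgd y hy0).deriv]
        have hlt : (1 + y) ^ (A - 1) < y ^ (A - 1) :=
          Real.rpow_lt_rpow_of_neg hy0 (by linarith) (by linarith)
        nlinarith [mul_lt_mul_of_pos_left hlt hA0]
    have he : (fun y : ℝ => (1 + y) ^ A - y ^ A) k' = (fun y : ℝ => (1 + y) ^ A - y ^ A) k := by
      simp only
      have h1 := hk'eq.trans hcond2.symm
      exact mul_left_cancel₀ (ne_of_gt hMb0) h1
    exact hg.injOn (mem_Ioi.mpr hk'0) (mem_Ioi.mpr hkpos) he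
  · exfalso
    have hanti : StrictAntiOn V (Icc 0 1) := by
      apply strictAntiOn_of_deriv_neg (convex_Icc 0 1) hVcont
      intro t ht
      rw [interior_Icc] at ht
      exact hustneg t (hneg t ht)
    have h1 := hanti (left_mem_Icc.mpr zero_le_one) (right_mem_Icc.mpr zero_le_one) zero_lt_one
    rw [hV0, hV1] at h1
    linarith
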